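/- Let c be a real number, let s and t be positive real numbers, and let H₀ be a nonzero real number. Suppose λ, μ : I → ℝ are twice continuously differentiable functions on a nonempty open interval I ⊆ ℝ such that λ and μ vanish nowhere on I, s·λ(x) + t·μ(x) = H₀ for all x ∈ I, and the equations λ(x)·λ''(x) − 2·λ'(x)² = c·λ(x)² and μ(x)·μ''(x) − 2·μ'(x)² = c·μ(x)² hold for all x ∈ I. Then λ' vanishes identically on I; in particular λ and μ are constant on I. -/

import Mathlib

/-- If `λ, μ` are `C²` functions on a nonempty open interval `I = (a, b)`
which vanish nowhere, satisfy `s·λ + t·μ = H₀` (with `s, t > 0`, `H₀ ≠ 0`) and the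
Riccati-type equations `λ·λ'' − 2·λ'² = c·λ²` and `μ·μ'' − 2·μ'² = c·μ²` on `I`,
then `λ'` vanishes identically on `I`; in particular `λ` and `μ` are constant on `I`. -/
theorem cmc_triharmonic_ode_rigidity
    (c s t H₀ : ℝ) (hs : 0 < s) (ht : 0 < t) (hH₀ : H₀ ≠ 0)
    (a b : ℝ) (hab : a < b) (lam mu : ℝ → ℝ)
    (hlamC2 : ContDiffOn ℝ 2 lam (Set.Ioo a b))
    (hmuC2 : ContDiffOn ℝ 2 mu (Set.Ioo a b))
    (hlam0 : ∀ x ∈ Set.Ioo a b, lam x ≠ 0)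
    (hmu0 : ∀ x ∈ Set.Ioo a b, mu x ≠ 0)
    (hsum : ∀ x ∈ Set.Ioo a b, s * lam x + t * mu x = H₀)
    (hODElam : ∀ x ∈ Set.Ioo a b,
      lam x * deriv (deriv lam) x - 2 * (deriv lam x) ^ 2 = c * (lam x) ^ 2)
    (hODEmu : ∀ x ∈ Set.Ioo a b,
      mu x * deriv (deriv mu) x - 2 * (deriv mu x) ^ 2 = c * (mu x) ^ 2) :
    (∀ x ∈ Set.Ioo a b, deriv lam x = 0) ∧
      (∀ x ∈ Set.Ioo a b, ∀ y ∈ Set.Ioo a b, lam x = lam y ∧ mu x = mu y) := by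
  have hIopen : IsOpen (Set.Ioo a b) := isOpen_Ioo
  have ht0 : t ≠ 0 := ne_of_gt ht
  have hs0 : s ≠ 0 := ne_of_gt hs
  -- differentiability facts
  have hlam'C : ContDiffOn ℝ 1 (deriv lam) (Set.Ioo a b) :=
    hlamC2.deriv_of_isOpen hIopen (by norm_num)
  have hmu'C : ContDiffOn ℝ 1 (deriv mu) (Set.Ioo a b) :=
    hmuC2.deriv_of_isOpen hIopen (by norm_num)
  have hlamat : ∀ x ∈ Set.Ioo a b, HasDerivAt lam (deriv lam x) x := by
    intro x hx
    exact ((hlamC2.differentiableOn two_ne_zero).differentiableAt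
      (hIopen.mem_nhds hx)).hasDerivAt
  have hmuat : ∀ x ∈ Set.Ioo a b, HasDerivAt mu (deriv mu x) x := by
    intro x hx
    exact ((hmuC2.differentiableOn two_ne_zero).differentiableAt
      (hIopen.mem_nhds hx)).hasDerivAt
  have hlam'at : ∀ x ∈ Set.Ioo a b, HasDerivAt (deriv lam) (deriv (deriv lam) x) x := by
    intro x hx
    exact ((hlam'C.differentiableOn one_ne_zero).differentiableAt (hIopen.mem_nhds hx)).hasDerivAt
  -- first derivative of mu in terms of lam
  have hmu' : ∀ x ∈ Set.Ioo a b, deriv mu x = -(s / t) * deriv lam x := by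
    intro x hx
    have hev : mu =ᶠ[nhds x] fun y => (H₀ - s * lam y) / t := by
      filter_upwards [hIopen.mem_nhds hx] with y hy
      have := hsum y hy
      field_simp
      linarith
    have hD : HasDerivAt (fun y => (H₀ - s * lam y) / t)
        (-(s / t) * deriv lam x) x := by
      have h1 : HasDerivAt (fun y => H₀ - s * lam y) (0 - s * deriv lam x) x :=
        (hasDerivAt_const x H₀).sub ((hlamat x hx).const_mul s)
      have := h1.div_const t
      rw [show -(s / t) * deriv lam x = (0 - s * deriv lam x) / t by ring]
      exact this
    rw [hev.deriv_eq, hD.deriv]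
  -- second derivative of mu in terms of lam
  have hmu'' : ∀ x ∈ Set.Ioo a b,
      deriv (deriv mu) x = -(s / t) * deriv (deriv lam) x := by
    intro x hx
    have hev : deriv mu =ᶠ[nhds x] fun y => -(s / t) * deriv lam y := by
      filter_upwards [hIopen.mem_nhds hx] with y hy
      exact hmu' y hy
    have hD : HasDerivAt (fun y => -(s / t) * deriv lam y)
        (-(s / t) * deriv (deriv lam) x) x := (hlam'at x hx).const_mul _
    rw [hev.deriv_eq, hD.deriv]
  -- the key first-order relation (A)
  have keyA : ∀ x ∈ Set.Ioo a b,
      2 * s * (deriv lam x) ^ 2 + c * t * lam x * mu x = 0 := by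
    intro x hx
    have h1 := hODElam x hx
    have h2 := hODEmu x hx
    rw [hmu' x hx, hmu'' x hx] at h2
    have hsum' := hsum x hx
    have key : (2 * s * (deriv lam x) ^ 2 + c * t * lam x * mu x) * (H₀ * t) = 0 := by
      rw [← hsum']
      field_simp at h2
      linear_combination (-(s * t * t * mu x)) * h1 - (t * lam x) * h2
    rcases mul_eq_zero.mp key with h | h
    · exact h
    · exact absurd h (mul_ne_zero hH₀ ht0)
  -- main claim: deriv lam = 0 on I
  have hderiv0 : ∀ x ∈ Set.Ioo a b, deriv lam x = 0 := by
    by_cases hc : c = 0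
    · intro x hx
      have h := keyA x hx
      rw [hc] at h
      have h' : s * (deriv lam x) ^ 2 = 0 := by linear_combination h / 2
      rcases mul_eq_zero.mp h' with h'' | h''
      · exact absurd h'' hs0
      · exact pow_eq_zero_iff two_ne_zero |>.mp h''
    · -- c ≠ 0 : points with nonzero derivative force lam = H₀ / (2 s)
      have hUconst : ∀ x ∈ Set.Ioo a b, deriv lam x ≠ 0 → lam x = H₀ / (2 * s) := by
        intro x hx hD
        -- the function in (A) vanishes on an open set, hence its derivative vanishes
        have hg : deriv (fun y => 2 * s * (deriv lam y) ^ 2 + c * t * (lam y * mu y)) x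
            = 0 := by
          have hev : (fun y => 2 * s * (deriv lam y) ^ 2 + c * t * (lam y * mu y))
              =ᶠ[nhds x] fun _ => (0 : ℝ) := by
            filter_upwards [hIopen.mem_nhds hx] with y hy
            linear_combination keyA y hy
          rw [hev.deriv_eq, deriv_const]
        have hsq : HasDerivAt (fun y => (deriv lam y) ^ 2)
            (2 * deriv lam x * deriv (deriv lam) x) x := by
          have h := (hlam'at x hx).fun_pow 2
          rw [show (2:ℝ) * deriv lam x * deriv (deriv lam) x
            = ((2:ℕ):ℝ) * deriv lam x ^ (2 - 1) * deriv (deriv lam) x by norm_num]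
          exact h
        have hprod : HasDerivAt (fun y => lam y * mu y)
            (deriv lam x * mu x + lam x * deriv mu x) x :=
          (hlamat x hx).mul (hmuat x hx)
        have hD1 : HasDerivAt (fun y => 2 * s * (deriv lam y) ^ 2 + c * t * (lam y * mu y))
            (2 * s * (2 * deriv lam x * deriv (deriv lam) x)
              + c * t * (deriv lam x * mu x + lam x * deriv mu x)) x :=
          (hsq.const_mul (2 * s)).add (hprod.const_mul (c * t))
        have hrel := hD1.deriv
        rw [hg] at hrel
        rw [hmu' x hx] at hrel
        -- clear denominators
        have hrel2 : deriv lam x *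
            (4 * s * t * deriv (deriv lam) x + c * t ^ 2 * mu x - c * s * t * lam x) = 0 := by
          field_simp at hrel
          linear_combination -t * hrel
        have e3 : 4 * s * t * deriv (deriv lam) x + c * t ^ 2 * mu x - c * s * t * lam x
            = 0 := by
          rcases mul_eq_zero.mp hrel2 with h' | h'
          · exact absurd h' hD
          · exact h'
        have h1 := hODElam x hx
        have hA := keyA x hx
        have hcLM : c * lam x * (s * lam x - t * mu x) = 0 := by
          have h3 : 3 * c * s * t * (lam x) ^ 2 - 3 * c * t ^ 2 * lam x * mu x = 0 := by
            linear_combination (lam x) * e3 - (4 * s * t) * h1 - (4 * t) * hA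
          have := mul_right_cancel₀ ht0 (show (c * lam x * (s * lam x - t * mu x) * 3) * t
            = 0 * t by linear_combination h3)
          linarith [this]
        have heq : s * lam x = t * mu x := by
          rcases mul_eq_zero.mp hcLM with h' | h'
          · rcases mul_eq_zero.mp h' with h'' | h''
            · exact absurd h'' hc
            · exact absurd h'' (hlam0 x hx)
          · linarith [sub_eq_zero.mp h']
        have hsum' := hsum x hx
        field_simp
        linarith
      -- the set where deriv lam ≠ 0 is open; lam is locally constant there
      intro x hx
      by_contra hD
      have hVopen : IsOpen (Set.Ioo a b ∩ deriv lam ⁻¹' {(0 : ℝ)}ᶜ) :=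
        hlam'C.continuousOn.isOpen_inter_preimage hIopen isOpen_compl_singleton
      have hxV : x ∈ Set.Ioo a b ∩ deriv lam ⁻¹' {(0 : ℝ)}ᶜ := ⟨hx, hD⟩
      have hev : lam =ᶠ[nhds x] fun _ => H₀ / (2 * s) := by
        filter_upwards [hVopen.mem_nhds hxV] with y hy
        exact hUconst y hy.1 hy.2
      have : deriv lam x = 0 := by rw [hev.deriv_eq, deriv_const]
      exact hD this
  -- constancy of lam from vanishing derivative
  have hlamconst : ∀ u v : ℝ, u ∈ Set.Ioo a b → v ∈ Set.Ioo a b → u ≤ v →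
      lam u = lam v := by
    intro u v hu hv huv
    have hsub : Set.Icc u v ⊆ Set.Ioo a b := Set.Icc_subset_Ioo hu.1 hv.2
    have hcont : ContinuousOn lam (Set.Icc u v) :=
      ((hlamC2.differentiableOn two_ne_zero).continuousOn).mono hsub
    have h := constant_of_has_deriv_right_zero hcont (fun z hz => by
      have hz' : z ∈ Set.Ioo a b := hsub ⟨hz.1, le_of_lt hz.2⟩
      have hder := hlamat z hz'
      rw [hderiv0 z hz'] at hder
      exact hder.hasDerivWithinAt)
    exact (h v (Set.right_mem_Icc.mpr huv)).symm
  refine ⟨hderiv0, ?_⟩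
  intro x hx y hy
  have hl : lam x = lam y := by
    rcases le_total x y with h | h
    · exact hlamconst x y hx hy h
    · exact (hlamconst y x hy hx h).symm
  refine ⟨hl, ?_⟩
  have h1 := hsum x hx
  have h2 := hsum y hy
  have : t * mu x = t * mu y := by linear_combination h1 - h2 - s * hl
  exact mul_left_cancel₀ ht0 this
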